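/- arXiv:1712.05600 — 3 statements merged into one kernel-verified Lean document; each statement's English description precedes it below -/
import Mathlib

section
/- The multiparameter R-matrix R = u·Σ_i e_{ii}⊗e_{ii} + u^{-1}·Σ_{i>j} p_{ji} e_{ii}⊗e_{jj} + u^{-1}·Σ_{i<j} q_{ij} e_{ii}⊗e_{jj} + (u − u^{-1})·Σ_{i>j} e_{ij}⊗e_{ji} ∈ End(K^n ⊗ K^n) satisfies the Yang–Baxter equation R_{12} R_{13} R_{23} = R_{23} R_{13} R_{12} in End(K^n ⊗ K^n ⊗ K^n), where R_{ab} acts as R on the a-th and b-th tensor factors and as the identity on the remaining factor. -/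
open Finset

variable {K : Type*} [Field K] {A : Type*} [Ring A] [Algebra K A]

/-- The `(p,u)`-condition on the multiparameters: `u` is a unit with `u² ≠ -1`, the
`pᵢⱼ, qᵢⱼ` are units with `pᵢⱼqᵢⱼ = u²` for `i < j`, `pᵢⱼpⱼᵢ = qᵢⱼqⱼᵢ = 1` and
`pᵢᵢ = qᵢᵢ = 1`. -/
def PUCondition {N : ℕ} (p q : Fin N → Fin N → K) (u : K) : Prop :=
  u ≠ 0 ∧ u ^ 2 ≠ -1 ∧
    (∀ i j : Fin N, i < j → p i j * q i j = u ^ 2) ∧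
    (∀ i j : Fin N, p i j * p j i = 1) ∧
    (∀ i j : Fin N, q i j * q j i = 1) ∧
    (∀ i : Fin N, p i i = 1 ∧ q i i = 1)

/-- A `(p,u)`-matrix over the `K`-algebra `A`. -/
def IsPUMatrix {N : ℕ} (p q : Fin N → Fin N → K) (u : K)
    (T : Matrix (Fin N) (Fin N) A) : Prop :=
  ∀ i j k l : Fin N, i < j → k < l →
    T i k * T i l = q k l • (T i l * T i k) ∧
    T i k * T j k = p i j • (T j k * T i k) ∧
    q k l • (T i l * T j k) = p i j • (T j k * T i l) ∧
    (q k l)⁻¹ • (T i k * T j l) - (q i j)⁻¹ • (T j l * T i k)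
      = (1 - u⁻¹ ^ 2) • (T i l * T j k)

/-- Ordered product `f 0 * f 1 * ⋯ * f (t-1)` in a (possibly noncommutative) ring. -/
def oprod {t : ℕ} (f : Fin t → A) : A := ((List.finRange t).map f).prod

/-- The sign `(−q)_σ = (−1)^{ℓ(σ)} ∏_{i<j, σ(i)>σ(j)} q_{σ(j)σ(i)}`. -/
def qSign {N : ℕ} (q : Fin N → Fin N → K) (σ : Equiv.Perm (Fin N)) : K :=
  ∏ x ∈ Finset.univ.filter
      (fun x : Fin N × Fin N => x.1 < x.2 ∧ σ x.2 < σ x.1),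
    (-q (σ x.2) (σ x.1))

/-- The quantum determinant `det_q(T) = Σ_σ (−q)_σ t_{1σ(1)} ⋯ t_{Nσ(N)}`. -/
def qdet {N : ℕ} (q : Fin N → Fin N → K) (T : Matrix (Fin N) (Fin N) A) : A :=
  ∑ σ : Equiv.Perm (Fin N), qSign q σ • oprod (fun i => T i (σ i))

/-- The quantum minor with row indices `r` and column indices `c`. -/
def qminor {N t : ℕ} (q : Fin N → Fin N → K) (T : Matrix (Fin N) (Fin N) A)
    (r c : Fin t → Fin N) : A :=
  ∑ σ : Equiv.Perm (Fin t),
    qSign (fun a b => q (c a) (c b)) σ • oprod (fun a => T (r a) (c (σ a)))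
open Matrix Kronecker in
/-- The multiparameter R-matrix
`R = u Σᵢ eᵢᵢ⊗eᵢᵢ + u⁻¹ Σ_{i>j} pⱼᵢ eᵢᵢ⊗eⱼⱼ + u⁻¹ Σ_{i<j} qᵢⱼ eᵢᵢ⊗eⱼⱼ + (u−u⁻¹) Σ_{i>j} eᵢⱼ⊗eⱼᵢ`. -/
def Rmat {n : ℕ} (p q : Fin n → Fin n → K) (u : K) :
    Matrix (Fin n × Fin n) (Fin n × Fin n) K :=
  u • ∑ i : Fin n, single i i (1 : K) ⊗ₖ single i i (1 : K)
    + u⁻¹ • ∑ x ∈ Finset.univ.filter (fun x : Fin n × Fin n => x.2 < x.1),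
        p x.2 x.1 • (single x.1 x.1 (1 : K) ⊗ₖ single x.2 x.2 (1 : K))
    + u⁻¹ • ∑ x ∈ Finset.univ.filter (fun x : Fin n × Fin n => x.1 < x.2),
        q x.1 x.2 • (single x.1 x.1 (1 : K) ⊗ₖ single x.2 x.2 (1 : K))
    + (u - u⁻¹) • ∑ x ∈ Finset.univ.filter (fun x : Fin n × Fin n => x.2 < x.1),
        single x.1 x.2 (1 : K) ⊗ₖ single x.2 x.1 (1 : K)
/-- The operator `R₁₂ = R ⊗ id` on the triple tensor product `Kⁿ ⊗ Kⁿ ⊗ Kⁿ`. -/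
def lift12 {n : ℕ} (R : Matrix (Fin n × Fin n) (Fin n × Fin n) K) :
    Matrix (Fin n × Fin n × Fin n) (Fin n × Fin n × Fin n) K :=
  Matrix.of fun x y =>
    R (x.1, x.2.1) (y.1, y.2.1) * (if x.2.2 = y.2.2 then 1 else 0)

/-- The operator `R₁₃` acting on the first and third factors of `Kⁿ ⊗ Kⁿ ⊗ Kⁿ`. -/
def lift13 {n : ℕ} (R : Matrix (Fin n × Fin n) (Fin n × Fin n) K) :
    Matrix (Fin n × Fin n × Fin n) (Fin n × Fin n × Fin n) K :=
  Matrix.of fun x y =>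
    R (x.1, x.2.2) (y.1, y.2.2) * (if x.2.1 = y.2.1 then 1 else 0)

/-- The operator `R₂₃ = id ⊗ R` on the triple tensor product `Kⁿ ⊗ Kⁿ ⊗ Kⁿ`. -/
def lift23 {n : ℕ} (R : Matrix (Fin n × Fin n) (Fin n × Fin n) K) :
    Matrix (Fin n × Fin n × Fin n) (Fin n × Fin n × Fin n) K :=
  Matrix.of fun x y =>
    R (x.2.1, x.2.2) (y.2.1, y.2.2) * (if x.1 = y.1 then 1 else 0)


section YBEAux

open Matrix Kronecker

/-- The "diagonal" coefficient of the R-matrix. -/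
def acfYBE {n : ℕ} (p q : Fin n → Fin n → K) (u : K) (a b : Fin n) : K :=
  if a = b then u else if b < a then u⁻¹ * p b a else u⁻¹ * q a b

/-- The "off-diagonal" coefficient of the R-matrix. -/
def bcfYBE {n : ℕ} (u : K) (a b : Fin n) : K := if b < a then u - u⁻¹ else 0

lemma iteMAYBE {α β : Type*} (P : Prop) [Decidable P] (M : Matrix α β K) (x : α) (y : β) :
    (if P then M else 0) x y = if P then M x y else 0 := by split <;> simp

lemma lt_ite_eq_commYBE {n : ℕ} (x y a b : Fin n) (v : K) :
    (if x < y then if a = b then v else 0 else 0)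
      = if a = b then if x < y then v else 0 else 0 := by
  split_ifs <;> rfl

set_option maxHeartbeats 2000000 in
theorem Rmat_applyYBE {n : ℕ} (p q : Fin n → Fin n → K) (u : K) (a b c d : Fin n) :
    Rmat p q u (a, b) (c, d)
      = (if c = a ∧ d = b then acfYBE p q u a b else 0)
        + (if c = b ∧ d = a then bcfYBE u a b (n := n) else 0) := by
  simp only [Rmat, Matrix.add_apply, Matrix.smul_apply, Matrix.sum_apply, Finset.sum_filter,
    iteMAYBE, kroneckerMap_apply, Matrix.single, Matrix.of_apply, smul_eq_mul,
    Fintype.sum_prod_type, ite_and, mul_ite, ite_mul, mul_zero, zero_mul, mul_one, one_mul,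
    lt_ite_eq_commYBE,
    Finset.sum_ite_eq, Finset.sum_ite_eq', Finset.mem_univ, if_true, if_false, zero_add, add_zero,
    Finset.sum_ite_irrel, Finset.sum_const_zero]
  simp only [acfYBE, bcfYBE]
  split_ifs <;> first | rfl | omega | ring

end YBEAux

set_option maxHeartbeats 8000000 in
/-- the multiparameter R-matrix satisfies the Yang–Baxter equation
`R₁₂ R₁₃ R₂₃ = R₂₃ R₁₃ R₁₂`. -/
theorem Rmat_yang_baxter {n : ℕ} (p q : Fin n → Fin n → K) (u : K)
    (hpu : PUCondition p q u) :
    lift12 (Rmat p q u) * lift13 (Rmat p q u) * lift23 (Rmat p q u)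
      = lift23 (Rmat p q u) * lift13 (Rmat p q u) * lift12 (Rmat p q u) := by
  obtain ⟨hu, -, hpq, hp1, hq1, -⟩ := hpu
  have hR := Rmat_applyYBE p q u
  have hp0 : ∀ i j, p i j ≠ 0 := fun i j => left_ne_zero_of_mul_eq_one (hp1 i j)
  have hq0 : ∀ i j, q i j ≠ 0 := fun i j => left_ne_zero_of_mul_eq_one (hq1 i j)
  have hqd : ∀ i j : Fin n, i < j → q i j = u ^ 2 / p i j := by
    intro i j h
    field_simp [hp0 i j]
    linear_combination hpq i j h
  have hqu : ∀ i j : Fin n, i < j → q j i = p i j / u ^ 2 := by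
    intro i j h
    have h2 := hq1 i j
    have h3 := hpq i j h
    field_simp
    calc q j i * u ^ 2 = q j i * (p i j * q i j) := by rw [h3]
    _ = p i j * (q i j * q j i) := by ring
    _ = p i j := by rw [h2, mul_one]
  ext ⟨x1, x2, x3⟩ ⟨w1, w2, w3⟩
  simp only [Matrix.mul_apply, lift12, lift13, lift23, Matrix.of_apply, Fintype.sum_prod_type, hR,
    ite_and, mul_ite, ite_mul, mul_zero, zero_mul, mul_one, one_mul, add_mul, mul_add,
    Finset.sum_add_distrib,
    Finset.sum_ite_eq, Finset.sum_ite_eq', Finset.mem_univ, if_true, zero_add, add_zero,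
    Finset.sum_ite_irrel, Finset.sum_const_zero]
  simp only [@eq_comm (Fin n)]
  split_ifs <;>
    first
      | rfl
      | omega
      | (subst_vars
         try simp only [acfYBE, bcfYBE]
         all_goals ((try split_ifs) <;>
           first
             | rfl
             | omega
             | (try simp_all only [hqd, hqu]
                all_goals field_simp [hp0, hq0]
                all_goals ring)))
end

section
/- Let T be an n×n (p,u)-matrix over a K-algebra A and let x_1, …, x_n ∈ A satisfy x_i^2 = 0 and x_j x_i = −q_{ij} x_i x_j for i < j, with every x_k commuting with every entry t_{ij} of T. Set δ_i = Σ_{j=1}^n t_{ij} x_j. Then for any indices i_1, …, i_t, one has δ_{i_1} δ_{i_2} ⋯ δ_{i_t} = Σ_{j_1 < ⋯ < j_t} det_q(T^{i_1…i_t}_{j_1…j_t}) x_{j_1} x_{j_2} ⋯ x_{j_t}, where the sum runs over all strictly increasing column indices 1 ≤ j_1 < ⋯ < j_t ≤ n. -/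
open Finset

variable {K : Type*} [Field K] {A : Type*} [Ring A] [Algebra K A]

section Aux

variable {K : Type*} [Field K] {A : Type*} [Ring A] [Algebra K A]

lemma oprod_congr {t : ℕ} {f g : Fin t → A} (h : ∀ a, f a = g a) : oprod f = oprod g := by
  rw [funext h]

lemma oprod_succ {t : ℕ} (f : Fin (t + 1) → A) :
    oprod f = f 0 * oprod (fun a => f a.succ) := by
  rw [oprod, List.finRange_succ, List.map_cons, List.prod_cons, List.map_map, oprod]
  rfl

lemma oprod_sum {m : ℕ} : ∀ {t : ℕ} (f : Fin t → Fin m → A),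
    oprod (fun a => ∑ j, f a j) = ∑ c : Fin t → Fin m, oprod (fun a => f a (c a)) := by
  intro t
  induction t with
  | zero =>
    intro f
    simp [oprod]
  | succ t ih =>
    intro f
    rw [oprod_succ, ih (fun a j => f a.succ j), Finset.sum_mul_sum,
      ← (Fin.consEquiv (fun _ : Fin (t + 1) => Fin m)).sum_comp
        (fun c => oprod fun a => f a (c a)),
      Fintype.sum_prod_type]
    refine Finset.sum_congr rfl fun j _ => Finset.sum_congr rfl fun c _ => ?_
    rw [show ((Fin.consEquiv (fun _ : Fin (t + 1) => Fin m)) (j, c)) = Fin.cons j c from rfl,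
      oprod_succ]
    simp [Fin.cons_zero, Fin.cons_succ]

lemma oprod_split : ∀ {t : ℕ} (g y : Fin t → A), (∀ a b, Commute (y a) (g b)) →
    oprod (fun a => g a * y a) = oprod g * oprod y := by
  intro t
  induction t with
  | zero => intro g y _; simp [oprod]
  | succ t ih =>
    intro g y h
    rw [oprod_succ, oprod_succ g, oprod_succ y,
      ih (fun a => g a.succ) (fun a => y a.succ) (fun a b => h a.succ b.succ)]
    have hc : Commute (y 0) (oprod fun a => g a.succ) := by
      show Commute (y 0) ((List.map (fun a => g a.succ) (List.finRange t)).prod)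
      apply Commute.list_prod_right
      intro z hz
      obtain ⟨a, -, rfl⟩ := List.mem_map.mp hz
      exact h 0 a.succ
    rw [mul_assoc, ← mul_assoc (y 0), hc.eq, mul_assoc, ← mul_assoc]

lemma x_mul_prod {m : ℕ} (x : Fin m → A)
    (hx2 : ∀ i, x i * x i = 0)
    (hswap : ∀ i j : Fin m, i ≠ j → ∃ s : K, x i * x j = s • (x j * x i)) :
    ∀ (l : List (Fin m)) (i : Fin m), i ∈ l → x i * (l.map x).prod = 0 := by
  intro l
  induction l with
  | nil => simp
  | cons j l' ih =>
    intro i hi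
    rw [List.map_cons, List.prod_cons, ← mul_assoc]
    by_cases hij : i = j
    · subst hij; rw [hx2, zero_mul]
    · obtain ⟨s, hs⟩ := hswap i j hij
      have hi' : i ∈ l' := (List.mem_cons.mp hi).resolve_left hij
      rw [hs, smul_mul_assoc, mul_assoc, ih i hi', mul_zero, smul_zero]

lemma prod_x_of_dup {m : ℕ} (x : Fin m → A)
    (hx2 : ∀ i, x i * x i = 0)
    (hswap : ∀ i j : Fin m, i ≠ j → ∃ s : K, x i * x j = s • (x j * x i)) :
    ∀ l : List (Fin m), ¬ l.Nodup → (l.map x).prod = 0 := by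
  intro l
  induction l with
  | nil => intro h; exact absurd List.nodup_nil h
  | cons j l' ih =>
    intro h
    rw [List.map_cons, List.prod_cons]
    by_cases hj : j ∈ l'
    · exact x_mul_prod x hx2 hswap l' j hj
    · rw [ih (fun hnd => h (List.nodup_cons.mpr ⟨hj, hnd⟩)), mul_zero]

end Aux

section Aux2

variable {K : Type*} [Field K] {A : Type*} [Ring A] [Algebra K A]

/-- The set of inversions of a permutation. -/
def invSet {t : ℕ} (σ : Equiv.Perm (Fin t)) : Finset (Fin t × Fin t) :=
  Finset.univ.filter (fun ab : Fin t × Fin t => ab.1 < ab.2 ∧ σ ab.2 < σ ab.1)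

lemma qSign_eq_prod_invSet {t : ℕ} (Q : Fin t → Fin t → K) (σ : Equiv.Perm (Fin t)) :
    qSign Q σ = ∏ ab ∈ invSet σ, (-Q (σ ab.2) (σ ab.1)) := rfl

/-- Swapping two adjacent indices preserves strict inequalities except for that exact pair. -/
lemma swap_lt_swap {t : ℕ} {k0 k1 : Fin t} (hk : (k0 : ℕ) + 1 = (k1 : ℕ))
    {a b : Fin t} (hab : a < b) (hne : ¬(a = k0 ∧ b = k1)) :
    Equiv.swap k0 k1 a < Equiv.swap k0 k1 b := by
  have hv : ∀ u v : Fin t, u ≠ v → (u : ℕ) ≠ (v : ℕ) := fun u v h hh => h (Fin.ext hh)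
  have hab' : (a : ℕ) < (b : ℕ) := hab
  by_cases h1 : a = k0
  · subst h1
    by_cases h2 : b = k1
    · exact absurd ⟨rfl, h2⟩ hne
    · have hbk0 : b ≠ a := (ne_of_gt hab)
      rw [Equiv.swap_apply_left, Equiv.swap_apply_of_ne_of_ne hbk0 h2, Fin.lt_def]
      have := hv b k1 h2
      omega
  · by_cases h2 : a = k1
    · subst h2
      have hbk0 : b ≠ k0 := by intro h; subst h; omega
      have hbk1 : b ≠ a := ne_of_gt hab
      rw [Equiv.swap_apply_right, Equiv.swap_apply_of_ne_of_ne hbk0 hbk1, Fin.lt_def]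
      omega
    · rw [Equiv.swap_apply_of_ne_of_ne h1 h2]
      by_cases h3 : b = k0
      · subst h3
        rw [Equiv.swap_apply_left, Fin.lt_def]
        omega
      · by_cases h4 : b = k1
        · subst h4
          rw [Equiv.swap_apply_right, Fin.lt_def]
          have := hv a k0 h1
          omega
        · rw [Equiv.swap_apply_of_ne_of_ne h3 h4]
          exact hab

/-- The pair-swapping embedding. -/
def swapEmb {t : ℕ} (k0 k1 : Fin t) : (Fin t × Fin t) ↪ (Fin t × Fin t) :=
  ⟨fun ab => (Equiv.swap k0 k1 ab.1, Equiv.swap k0 k1 ab.2), by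
    intro ab1 ab2 h
    simp only [Prod.mk.injEq] at h
    rw [Prod.ext_iff]
    exact ⟨(Equiv.swap k0 k1).injective h.1, (Equiv.swap k0 k1).injective h.2⟩⟩

lemma swapEmb_apply {t : ℕ} (k0 k1 : Fin t) (ab : Fin t × Fin t) :
    swapEmb k0 k1 ab = (Equiv.swap k0 k1 ab.1, Equiv.swap k0 k1 ab.2) := rfl

lemma notmem_swapEmb {t : ℕ} {k0 k1 : Fin t} (hk : (k0 : ℕ) + 1 = (k1 : ℕ))
    (σ : Equiv.Perm (Fin t)) :
    (k0, k1) ∉ (invSet (σ * Equiv.swap k0 k1)).map (swapEmb k0 k1) := by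
  intro hmem
  obtain ⟨⟨a', b'⟩, hm, he⟩ := Finset.mem_map.mp hmem
  simp only [swapEmb_apply, Prod.mk.injEq] at he
  have ha' : a' = k1 := by
    apply (Equiv.swap k0 k1).injective
    rw [he.1, Equiv.swap_apply_right]
  have hb' : b' = k0 := by
    apply (Equiv.swap k0 k1).injective
    rw [he.2, Equiv.swap_apply_left]
  rw [invSet, Finset.mem_filter] at hm
  have h2 : a' < b' := hm.2.1
  rw [ha', hb', Fin.lt_def] at h2
  omega

lemma invSet_descent {t : ℕ} {k0 k1 : Fin t} (hk : (k0 : ℕ) + 1 = (k1 : ℕ))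
    {σ : Equiv.Perm (Fin t)} (hd : σ k1 < σ k0) :
    invSet σ = insert (k0, k1) ((invSet (σ * Equiv.swap k0 k1)).map (swapEmb k0 k1)) := by
  have hlt : k0 < k1 := by rw [Fin.lt_def]; omega
  ext ⟨a, b⟩
  simp only [invSet, Finset.mem_insert, Finset.mem_map, Finset.mem_filter, Finset.mem_univ,
    true_and, swapEmb_apply, Prod.mk.injEq,
    Prod.exists]
  simp only [Equiv.Perm.mul_apply]
  constructor
  · rintro ⟨h1, h2⟩
    by_cases he : a = k0 ∧ b = k1
    · exact Or.inl he
    · refine Or.inr ⟨Equiv.swap k0 k1 a, Equiv.swap k0 k1 b,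
        ⟨swap_lt_swap hk h1 he, ?_⟩, Equiv.swap_apply_self _ _ _, Equiv.swap_apply_self _ _ _⟩
      rw [Equiv.swap_apply_self, Equiv.swap_apply_self]
      exact h2
  · rintro (⟨rfl, rfl⟩ | ⟨a', b', ⟨hab', hinv⟩, rfl, rfl⟩)
    · exact ⟨hlt, hd⟩
    · constructor
      · refine swap_lt_swap hk hab' ?_
        rintro ⟨rfl, rfl⟩
        rw [Equiv.swap_apply_left, Equiv.swap_apply_right] at hinv
        exact absurd hinv (asymm hd)
      · exact hinv

lemma card_invSet_descent {t : ℕ} {k0 k1 : Fin t} (hk : (k0 : ℕ) + 1 = (k1 : ℕ))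
    {σ : Equiv.Perm (Fin t)} (hd : σ k1 < σ k0) :
    (invSet (σ * Equiv.swap k0 k1)).card < (invSet σ).card := by
  rw [invSet_descent hk hd, Finset.card_insert_of_notMem (notmem_swapEmb hk σ),
    Finset.card_map]
  omega

lemma qSign_descent {t : ℕ} (Q : Fin t → Fin t → K) {k0 k1 : Fin t}
    (hk : (k0 : ℕ) + 1 = (k1 : ℕ)) {σ : Equiv.Perm (Fin t)} (hd : σ k1 < σ k0) :
    qSign Q σ = (-(Q (σ k1) (σ k0))) * qSign Q (σ * Equiv.swap k0 k1) := by
  rw [qSign_eq_prod_invSet, invSet_descent hk hd,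
    Finset.prod_insert (notmem_swapEmb hk σ), Finset.prod_map,
    qSign_eq_prod_invSet]
  rfl

end Aux2

section Aux3

variable {K : Type*} [Field K] {A : Type*} [Ring A] [Algebra K A]

lemma oprod_pair_congr : ∀ {t : ℕ} (f g : Fin t → A) (k0 k1 : Fin t),
    (k0 : ℕ) + 1 = (k1 : ℕ) → ∀ c : K, f k0 * f k1 = c • (g k0 * g k1) →
    (∀ a : Fin t, a ≠ k0 → a ≠ k1 → f a = g a) → oprod f = c • oprod g := by
  intro t
  induction t with
  | zero => intro f g k0; exact k0.elim0
  | succ t ih =>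
    intro f g k0 k1 hk c hmid hoff
    rcases Nat.eq_zero_or_pos (k0 : ℕ) with h0 | h0
    · -- k0 = 0, k1 = 1
      obtain ⟨t', rfl⟩ : ∃ t', t = t' + 1 := ⟨t - 1, by have := k1.isLt; omega⟩
      have hk0 : k0 = 0 := Fin.ext (by simpa using h0)
      have hk1 : k1 = Fin.succ 0 := Fin.ext (by rw [Fin.val_succ, Fin.val_zero]; omega)
      rw [hk0, hk1] at hmid hoff
      have htail : oprod (fun a : Fin t' => f a.succ.succ) = oprod (fun a => g a.succ.succ) :=
        oprod_congr fun a => hoff a.succ.succ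
          (by simp [Fin.ext_iff])
          (by simp [Fin.ext_iff])
      rw [oprod_succ f, oprod_succ g, oprod_succ (fun a => f a.succ),
        oprod_succ (fun a => g a.succ)]
      show f 0 * (f (Fin.succ 0) * oprod fun a : Fin t' => f a.succ.succ)
          = c • (g 0 * (g (Fin.succ 0) * oprod fun a : Fin t' => g a.succ.succ))
      rw [htail, ← mul_assoc, ← mul_assoc, hmid, smul_mul_assoc]
    · -- k0 = j+1 : recurse on the tail
      have hk0t : (k0 : ℕ) - 1 < t := by have := k1.isLt; omega
      have hk1t : (k1 : ℕ) - 1 < t := by have := k1.isLt; omega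
      have hs0 : (⟨(k0 : ℕ) - 1, hk0t⟩ : Fin t).succ = k0 := Fin.ext
        (by rw [Fin.val_succ]; show (k0 : ℕ) - 1 + 1 = (k0 : ℕ); omega)
      have hs1 : (⟨(k1 : ℕ) - 1, hk1t⟩ : Fin t).succ = k1 := Fin.ext
        (by rw [Fin.val_succ]; show (k1 : ℕ) - 1 + 1 = (k1 : ℕ); omega)
      have hrec := ih (fun a => f a.succ) (fun a => g a.succ)
        ⟨(k0 : ℕ) - 1, hk0t⟩ ⟨(k1 : ℕ) - 1, hk1t⟩
        (show (k0 : ℕ) - 1 + 1 = (k1 : ℕ) - 1 by omega) c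
        (by show f (⟨(k0 : ℕ) - 1, hk0t⟩ : Fin t).succ * f (⟨(k1 : ℕ) - 1, hk1t⟩ : Fin t).succ
              = c • (g (⟨(k0 : ℕ) - 1, hk0t⟩ : Fin t).succ * g (⟨(k1 : ℕ) - 1, hk1t⟩ : Fin t).succ)
            rw [hs0, hs1]; exact hmid)
        (fun a ha0 ha1 => hoff a.succ
          (fun h => ha0 (Fin.succ_injective _ (h.trans hs0.symm)))
          (fun h => ha1 (Fin.succ_injective _ (h.trans hs1.symm))))
      rw [oprod_succ f, oprod_succ g, hrec,
        hoff 0 (fun h => by rw [← h] at h0; simp at h0)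
          (fun h => by rw [← h] at hk; simp at hk),
        mul_smul_comm]

lemma perm_eq_refl_of_no_inv {t : ℕ} (σ : Equiv.Perm (Fin t))
    (h : ∀ a b : Fin t, a < b → ¬ σ b < σ a) : ∀ a, σ a = a := by
  have hsm : StrictMono (σ : Fin t → Fin t) := by
    intro a b hab
    rcases lt_trichotomy (σ a) (σ b) with h' | h' | h'
    · exact h'
    · exact absurd (σ.injective h') (ne_of_lt hab)
    · exact absurd h' (h a b hab)
  have hid : (σ : Fin t → Fin t) = id := by
    have h := @StrictMono.range_inj (Fin t) (Fin t) _ _ (Finite.to_wellFoundedLT) _ _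
      hsm strictMono_id
    exact h.mp (by rw [Set.range_id, σ.surjective.range_eq])
  exact fun a => congrFun hid a

lemma oprod_perm_of_no_inv {t : ℕ} (y : Fin t → A) (Q : Fin t → Fin t → K)
    (σ : Equiv.Perm (Fin t)) (h : invSet σ = ∅) :
    oprod (fun a => y (σ a)) = qSign Q σ • oprod y := by
  have h' : ∀ a b : Fin t, a < b → ¬ σ b < σ a := by
    intro a b hab hlt
    have hmem : (a, b) ∈ invSet σ := by
      rw [invSet, Finset.mem_filter]
      exact ⟨Finset.mem_univ _, hab, hlt⟩
    rw [h] at hmem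
    exact absurd hmem (Finset.notMem_empty _)
  have hid := perm_eq_refl_of_no_inv σ h'
  rw [qSign_eq_prod_invSet, h, Finset.prod_empty, one_smul]
  exact oprod_congr fun a => by rw [hid a]

lemma exists_descent {t : ℕ} (σ : Equiv.Perm (Fin t))
    (h : ∃ a b : Fin t, a < b ∧ σ b < σ a) :
    ∃ k0 k1 : Fin t, (k0 : ℕ) + 1 = (k1 : ℕ) ∧ σ k1 < σ k0 := by
  by_contra hno
  push_neg at hno
  have adj : ∀ k0 k1 : Fin t, (k0 : ℕ) + 1 = (k1 : ℕ) → σ k0 < σ k1 := by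
    intro k0 k1 hkk
    have hne : σ k0 ≠ σ k1 := fun e => by
      have h2 := congrArg Fin.val (σ.injective e)
      omega
    exact lt_of_le_of_ne (hno k0 k1 hkk) hne
  have key : ∀ d : ℕ, ∀ a b : Fin t, (b : ℕ) = (a : ℕ) + d + 1 → σ a < σ b := by
    intro d
    induction d with
    | zero => intro a b hb; exact adj a b (by omega)
    | succ d ihd =>
      intro a b hb
      have ha1 : (a : ℕ) + 1 < t := by have := b.isLt; omega
      exact (adj a ⟨(a : ℕ) + 1, ha1⟩ rfl).trans (ihd ⟨(a : ℕ) + 1, ha1⟩ b (by simp; omega))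
  obtain ⟨a, b, hab, hba⟩ := h
  have hab' : (a : ℕ) < (b : ℕ) := hab
  exact absurd (key ((b : ℕ) - (a : ℕ) - 1) a b (by omega)) (not_lt.mpr hba.le)

lemma oprod_perm {t : ℕ} (y : Fin t → A) (Q : Fin t → Fin t → K)
    (hy : ∀ a b : Fin t, a < b → y b * y a = (-(Q a b)) • (y a * y b))
    (σ : Equiv.Perm (Fin t)) :
    oprod (fun a => y (σ a)) = qSign Q σ • oprod y := by
  suffices H : ∀ (N : ℕ) (σ : Equiv.Perm (Fin t)), (invSet σ).card ≤ N →
      oprod (fun a => y (σ a)) = qSign Q σ • oprod y from H _ σ le_rfl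
  intro N
  induction N with
  | zero =>
    intro σ hσ
    exact oprod_perm_of_no_inv y Q σ (Finset.card_eq_zero.mp (Nat.le_zero.mp hσ))
  | succ N ihN =>
    intro σ hσ
    by_cases h0 : invSet σ = ∅
    · exact oprod_perm_of_no_inv y Q σ h0
    · obtain ⟨⟨a, b⟩, hmem⟩ := Finset.nonempty_iff_ne_empty.mpr h0
      rw [invSet, Finset.mem_filter] at hmem
      obtain ⟨k0, k1, hk, hd⟩ := exists_descent σ ⟨a, b, hmem.2⟩
      have hcard : (invSet (σ * Equiv.swap k0 k1)).card ≤ N := by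
        have := card_invSet_descent hk hd
        omega
      have hstep : oprod (fun a => y (σ a))
          = (-(Q (σ k1) (σ k0))) • oprod (fun a => y ((σ * Equiv.swap k0 k1) a)) := by
        refine oprod_pair_congr (fun a => y (σ a)) (fun a => y ((σ * Equiv.swap k0 k1) a))
          k0 k1 hk _ ?_ ?_
        · show y (σ k0) * y (σ k1) = (-(Q (σ k1) (σ k0))) •
            (y ((σ * Equiv.swap k0 k1) k0) * y ((σ * Equiv.swap k0 k1) k1))
          have e0 : (σ * Equiv.swap k0 k1) k0 = σ k1 := by
            simp [Equiv.Perm.mul_apply, Equiv.swap_apply_left]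
          have e1 : (σ * Equiv.swap k0 k1) k1 = σ k0 := by
            simp [Equiv.Perm.mul_apply, Equiv.swap_apply_right]
          rw [e0, e1]
          exact hy (σ k1) (σ k0) hd
        · intro a ha0 ha1
          show y (σ a) = y ((σ * Equiv.swap k0 k1) a)
          rw [Equiv.Perm.mul_apply, Equiv.swap_apply_of_ne_of_ne ha0 ha1]
      rw [hstep, ihN _ hcard, smul_smul, ← qSign_descent Q hk hd]

end Aux3

/-- expansion of a product of the `δᵢ = Σⱼ tᵢⱼ xⱼ` in terms of quantum
minors: `δ_{i₁} ⋯ δ_{i_t} = Σ_{j₁<⋯<j_t} det_q(T^{i₁…i_t}_{j₁…j_t}) x_{j₁} ⋯ x_{j_t}`. -/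
theorem delta_prod_eq_sum_qminor {n : ℕ} (p q : Fin n → Fin n → K) (u : K)
    (hpu : PUCondition p q u) (T : Matrix (Fin n) (Fin n) A)
    (hT : IsPUMatrix p q u T) (x : Fin n → A)
    (hx2 : ∀ i : Fin n, x i * x i = 0)
    (hxq : ∀ i j : Fin n, i < j → x j * x i = -(q i j • (x i * x j)))
    (hcomm : ∀ (k i j : Fin n), Commute (x k) (T i j))
    (t : ℕ) (r : Fin t → Fin n) :
    oprod (fun a => ∑ j, T (r a) j * x j)
      = ∑ c ∈ Finset.univ.filter
          (fun c : Fin t → Fin n => ∀ a b : Fin t, a < b → c a < c b),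
          qminor q T r c * oprod (fun a => x (c a)) := by
  obtain ⟨hu0, hu1, hpq, hpp, hqq, hdiag⟩ := hpu
  have hswap : ∀ i j : Fin n, i ≠ j → ∃ s : K, x i * x j = s • (x j * x i) := by
    intro i j hij
    rcases lt_or_gt_of_ne hij with h | h
    · refine ⟨-(q j i), ?_⟩
      rw [neg_smul, hxq i j h, smul_neg, neg_neg, smul_smul, hqq j i, one_smul]
    · exact ⟨-(q j i), by rw [hxq j i h, neg_smul]⟩
  have hxlist : ∀ c : Fin t → Fin n,
      oprod (fun a => x (c a)) = (((List.finRange t).map c).map x).prod := by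
    intro c
    rw [oprod, List.map_map]
    rfl
  have hxzero : ∀ c : Fin t → Fin n, ¬ Function.Injective c →
      oprod (fun a => x (c a)) = 0 := by
    intro c hc
    rw [hxlist c]
    apply prod_x_of_dup x hx2 hswap
    intro hnd
    exact hc (fun a b hab =>
      List.inj_on_of_nodup_map hnd (List.mem_finRange a) (List.mem_finRange b) hab)
  have hsplit : ∀ c : Fin t → Fin n, oprod (fun a => T (r a) (c a) * x (c a))
      = oprod (fun a => T (r a) (c a)) * oprod (fun a => x (c a)) :=
    fun c => oprod_split _ _ (fun a b => hcomm (c a) (r b) (c b))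
  calc oprod (fun a => ∑ j, T (r a) j * x j)
      = ∑ c : Fin t → Fin n, oprod (fun a => T (r a) (c a) * x (c a)) :=
        oprod_sum (fun a j => T (r a) j * x j)
    _ = ∑ c : Fin t → Fin n,
          oprod (fun a => T (r a) (c a)) * oprod (fun a => x (c a)) :=
        Finset.sum_congr rfl fun c _ => hsplit c
    _ = ∑ c ∈ Finset.univ.filter (fun c : Fin t → Fin n => Function.Injective c),
          oprod (fun a => T (r a) (c a)) * oprod (fun a => x (c a)) := by
        refine (Finset.sum_filter_of_ne ?_).symm
        intro c _ hne
        by_contra hinj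
        exact hne (by rw [hxzero c hinj, mul_zero])
    _ = ∑ z ∈ (Finset.univ.filter
            (fun c : Fin t → Fin n => ∀ a b : Fin t, a < b → c a < c b))
          ×ˢ (Finset.univ : Finset (Equiv.Perm (Fin t))),
          oprod (fun a => T (r a) ((z.1 ∘ z.2) a)) * oprod (fun a => x ((z.1 ∘ z.2) a)) := by
        refine (Finset.sum_bij (fun z _ => z.1 ∘ z.2) ?_ ?_ ?_ ?_).symm
        · rintro ⟨c0, σ⟩ hz
          simp only [Finset.mem_product, Finset.mem_filter, Finset.mem_univ, true_and,
            and_true] at hz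
          simp only [Finset.mem_filter, Finset.mem_univ, true_and]
          exact Function.Injective.comp
            (show StrictMono c0 from fun a b hab => hz a b hab).injective σ.injective
        · rintro ⟨c0, σ⟩ hz1 ⟨c0', σ'⟩ hz2 heq
          simp only [Finset.mem_product, Finset.mem_filter, Finset.mem_univ, true_and,
            and_true] at hz1 hz2
          have hm : StrictMono c0 := fun a b hab => hz1 a b hab
          have hm' : StrictMono c0' := fun a b hab => hz2 a b hab
          have heq' : c0 ∘ ⇑σ = c0' ∘ ⇑σ' := heq
          have hr : Set.range c0 = Set.range c0' := by
            rw [← σ.surjective.range_comp c0, ← σ'.surjective.range_comp c0', heq']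
          have hc : c0 = c0' := by
            have h := @StrictMono.range_inj (Fin t) (Fin n) _ _ (Finite.to_wellFoundedLT) _ _
              hm hm'
            exact h.mp hr
          subst hc
          have hσ : σ = σ' := Equiv.ext fun a => hm.injective (congrFun heq' a)
          rw [hσ]
        · intro c hc
          simp only [Finset.mem_filter, Finset.mem_univ, true_and] at hc
          refine ⟨(c ∘ Tuple.sort c, (Tuple.sort c)⁻¹), ?_, ?_⟩
          · simp only [Finset.mem_product, Finset.mem_filter, Finset.mem_univ, true_and,
              and_true]
            intro a b hab
            exact (Tuple.monotone_sort c).strictMono_of_injective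
              (hc.comp (Tuple.sort c).injective) hab
          · funext a
            simp [Function.comp, Equiv.apply_symm_apply]
        · intro z hz
          rfl
    _ = ∑ c0 ∈ Finset.univ.filter
            (fun c : Fin t → Fin n => ∀ a b : Fin t, a < b → c a < c b),
          ∑ σ : Equiv.Perm (Fin t),
            oprod (fun a => T (r a) (c0 (σ a))) * oprod (fun a => x (c0 (σ a))) := by
        rw [Finset.sum_product]
        rfl
    _ = ∑ c ∈ Finset.univ.filter
          (fun c : Fin t → Fin n => ∀ a b : Fin t, a < b → c a < c b),
          qminor q T r c * oprod (fun a => x (c a)) := by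
        refine Finset.sum_congr rfl fun c0 hc0 => ?_
        have hmono : StrictMono c0 :=
          fun a b hab => (Finset.mem_filter.mp hc0).2 a b hab
        have hperm : ∀ σ : Equiv.Perm (Fin t), oprod (fun a => x (c0 (σ a)))
            = qSign (fun a b => q (c0 a) (c0 b)) σ • oprod (fun a => x (c0 a)) :=
          oprod_perm (fun a => x (c0 a)) (fun a b => q (c0 a) (c0 b))
            (fun a b hab => by rw [hxq (c0 a) (c0 b) (hmono hab), neg_smul])
        rw [qminor, Finset.sum_mul]
        refine Finset.sum_congr rfl fun σ _ => ?_
        rw [hperm σ, mul_smul_comm, smul_mul_assoc]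
end

section
/- (Pfaffian expansion) Let b_{ij} ∈ A for 1 ≤ i < j ≤ 2n, extended by b_{ji} = −p_{ij} b_{ij} for i < j (a p-antisymmetric matrix B). Then for every 0 ≤ t ≤ n, Pf_q(B) = Σ_I inv(I, I^c) · Pf_q(B_I) · Pf_q(B_{I^c}), where the sum runs over all subsets I = {i_1 < ⋯ < i_{2t}} of {1,…,2n} of size 2t, I^c is the complement, inv(I, J) = ∏_{i∈I, j∈J, i>j} (−q_{ji}), and Pf_q(B_I) is the quantum Pfaffian of the submatrix of B on the indices of I (using the parameters q_{ab} for a, b ∈ I with the induced ordering). -/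
open Finset

variable {K : Type*} [Field K] {A : Type*} [Ring A] [Algebra K A]

/-- `pairIdx i r = 2i + r` viewed in `Fin (2n)`. -/
def pairIdx {n : ℕ} (i : Fin n) (r : Fin 2) : Fin (2 * n) :=
  ⟨2 * i.val + r.val, by have hi := i.isLt; have hr := r.isLt; omega⟩

/-- The multiparameter quantum Pfaffian
`Pf_q(B) = Σ_{σ∈Π} (−q)_σ b_{σ(1)σ(2)} ⋯ b_{σ(2n−1)σ(2n)}` where `Π` consists of the
permutations with `σ(2i−1) < σ(2i)` for all `i`. -/
def qpf {n : ℕ} (q : Fin (2 * n) → Fin (2 * n) → K)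
    (B : Fin (2 * n) → Fin (2 * n) → A) : A :=
  ∑ σ ∈ Finset.univ.filter
      (fun σ : Equiv.Perm (Fin (2 * n)) =>
        ∀ i : Fin n, σ (pairIdx i 0) < σ (pairIdx i 1)),
    qSign q σ • oprod (fun i : Fin n => B (σ (pairIdx i 0)) (σ (pairIdx i 1)))
lemma finRange_add (t m : ℕ) :
    List.finRange (t + m) =
      (List.finRange t).map (Fin.castAdd m) ++ (List.finRange m).map (Fin.natAdd t) := by
  apply List.ext_getElem
  · simp
  · intro i h1 h2
    simp only [List.getElem_finRange, List.length_map, List.length_finRange] at *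
    rcases lt_or_ge i t with h | h
    · rw [List.getElem_append_left (by simpa)]
      simp [Fin.castAdd, Fin.castLE, Fin.cast]
    · rw [List.getElem_append_right (by simpa)]
      simp [Fin.natAdd, Fin.cast]
      omega

lemma oprod_split_s13 {t m : ℕ} (F : Fin (t + m) → A) :
    oprod F = oprod (fun i => F (Fin.castAdd m i)) * oprod (fun j => F (Fin.natAdd t j)) := by
  simp [oprod, finRange_add, Function.comp_def]

def embE (t m : ℕ) : Fin (2*t) ⊕ Fin (2*m) ≃ Fin (2*(t+m)) :=
  finSumFinEquiv.trans (finCongr (by ring))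

@[simp] lemma embE_inl_val {t m : ℕ} (a : Fin (2*t)) : (embE t m (Sum.inl a)).val = a.val := rfl
@[simp] lemma embE_inr_val {t m : ℕ} (b : Fin (2*m)) : (embE t m (Sum.inr b)).val = 2*t + b.val := rfl

lemma pairIdx_castAdd {t m : ℕ} (i : Fin t) (r : Fin 2) :
    pairIdx (Fin.castAdd m i) r = embE t m (Sum.inl (pairIdx i r)) := by
  apply Fin.ext; simp [pairIdx]

lemma pairIdx_natAdd {t m : ℕ} (j : Fin m) (r : Fin 2) :
    pairIdx (Fin.natAdd t j) r = embE t m (Sum.inr (pairIdx j r)) := by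
  apply Fin.ext; simp [pairIdx]; ring

def buildFun {t m : ℕ} (e : Fin (2*t) → Fin (2*(t+m))) (f : Fin (2*m) → Fin (2*(t+m)))
    (σ₁ : Equiv.Perm (Fin (2*t))) (σ₂ : Equiv.Perm (Fin (2*m))) :
    Fin (2*(t+m)) → Fin (2*(t+m)) :=
  fun k => Sum.elim e f ((Equiv.sumCongr σ₁ σ₂) ((embE t m).symm k))

@[simp] lemma buildFun_inl {t m : ℕ} (e f σ₁ σ₂) (a : Fin (2*t)) :
    buildFun (t := t) (m := m) e f σ₁ σ₂ (embE t m (Sum.inl a)) = e (σ₁ a) := by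
  simp [buildFun]

@[simp] lemma buildFun_inr {t m : ℕ} (e f σ₁ σ₂) (b : Fin (2*m)) :
    buildFun (t := t) (m := m) e f σ₁ σ₂ (embE t m (Sum.inr b)) = f (σ₂ b) := by
  simp [buildFun]

lemma buildFun_bijective {t m : ℕ} {e : Fin (2*t) → Fin (2*(t+m))} {f : Fin (2*m) → Fin (2*(t+m))}
    (he : StrictMono e) (hf : StrictMono f) (hd : ∀ a b, e a ≠ f b)
    (σ₁ : Equiv.Perm (Fin (2*t))) (σ₂ : Equiv.Perm (Fin (2*m))) :
    Function.Bijective (buildFun e f σ₁ σ₂) := by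
  have helim : Function.Injective (Sum.elim e f) := by
    intro x y hxy
    rcases x with a | b <;> rcases y with a' | b' <;> simp at hxy
    · exact congrArg _ (he.injective hxy)
    · exact absurd hxy (hd a b')
    · exact absurd hxy.symm (hd a' b)
    · exact congrArg _ (hf.injective hxy)
  have hbij : Function.Bijective (Sum.elim e f) := by
    rw [Fintype.bijective_iff_injective_and_card]
    exact ⟨helim, by simp; ring⟩
  exact hbij.comp ((Equiv.sumCongr σ₁ σ₂).bijective.comp (embE t m).symm.bijective)

noncomputable def buildPerm {t m : ℕ} {e : Fin (2*t) → Fin (2*(t+m))} {f : Fin (2*m) → Fin (2*(t+m))}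
    (he : StrictMono e) (hf : StrictMono f) (hd : ∀ a b, e a ≠ f b)
    (σ₁ : Equiv.Perm (Fin (2*t))) (σ₂ : Equiv.Perm (Fin (2*m))) :
    Equiv.Perm (Fin (2*(t+m))) :=
  Equiv.ofBijective _ (buildFun_bijective he hf hd σ₁ σ₂)

@[simp] lemma buildPerm_apply {t m : ℕ} {e : Fin (2*t) → Fin (2*(t+m))} {f : Fin (2*m) → Fin (2*(t+m))}
    (he : StrictMono e) (hf : StrictMono f) (hd : ∀ a b, e a ≠ f b) (σ₁ σ₂) (k) :
    buildPerm he hf hd σ₁ σ₂ k = buildFun e f σ₁ σ₂ k := rfl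

lemma qSign_eq_prod_ite {N : ℕ} (q : Fin N → Fin N → K) (σ : Equiv.Perm (Fin N)) :
    qSign q σ = ∏ x : Fin N, ∏ y : Fin N,
      if x < y ∧ σ y < σ x then -q (σ y) (σ x) else 1 := by
  rw [qSign, Finset.prod_filter, ← Fintype.prod_prod_type']

lemma qSign_split {t m : ℕ} (q : Fin (2*(t+m)) → Fin (2*(t+m)) → K)
    {e : Fin (2*t) → Fin (2*(t+m))} {f : Fin (2*m) → Fin (2*(t+m))}
    (he : StrictMono e) (hf : StrictMono f) (hd : ∀ a b, e a ≠ f b)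
    (σ₁ : Equiv.Perm (Fin (2*t))) (σ₂ : Equiv.Perm (Fin (2*m))) :
    qSign q (buildPerm he hf hd σ₁ σ₂)
      = (∏ x ∈ Finset.univ.filter (fun x : Fin (2*t) × Fin (2*m) => f x.2 < e x.1),
          (-q (f x.2) (e x.1)))
        * (qSign (fun a b => q (e a) (e b)) σ₁ * qSign (fun a b => q (f a) (f b)) σ₂) := by
  set Φ := buildPerm he hf hd σ₁ σ₂ with hΦ
  set E := embE t m with hE
  have hΦl : ∀ a, Φ (E (Sum.inl a)) = e (σ₁ a) := fun a => buildFun_inl e f σ₁ σ₂ a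
  have hΦr : ∀ b, Φ (E (Sum.inr b)) = f (σ₂ b) := fun b => buildFun_inr e f σ₁ σ₂ b
  set G : Fin (2*(t+m)) → Fin (2*(t+m)) → K :=
    fun x y => if x < y ∧ Φ y < Φ x then -q (Φ y) (Φ x) else 1 with hG
  have step1 : qSign q Φ
      = (∏ a, ∏ y : Fin (2*t) ⊕ Fin (2*m), G (E (Sum.inl a)) (E y))
        * (∏ b, ∏ y : Fin (2*t) ⊕ Fin (2*m), G (E (Sum.inr b)) (E y)) := by
    rw [qSign_eq_prod_ite]
    rw [← Equiv.prod_comp E (fun x => ∏ y, G x y)]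
    rw [Fintype.prod_sum_type (fun x => ∏ y, G (E x) y)]
    congr 1
    · exact Finset.prod_congr rfl fun a _ =>
        (Equiv.prod_comp E (fun y => G (E (Sum.inl a)) y)).symm
    · exact Finset.prod_congr rfl fun b _ =>
        (Equiv.prod_comp E (fun y => G (E (Sum.inr b)) y)).symm
  have hll : (∏ a, ∏ a', G (E (Sum.inl a)) (E (Sum.inl a')))
      = qSign (fun a b => q (e a) (e b)) σ₁ := by
    rw [qSign_eq_prod_ite]
    refine Finset.prod_congr rfl fun a _ => Finset.prod_congr rfl fun a' _ => ?_
    simp only [hG, hΦl]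
    refine if_congr (and_congr ?_ he.lt_iff_lt) rfl rfl
    simp only [hE, Fin.lt_def, embE_inl_val]
  have hrr : (∏ b, ∏ b', G (E (Sum.inr b)) (E (Sum.inr b')))
      = qSign (fun a b => q (f a) (f b)) σ₂ := by
    rw [qSign_eq_prod_ite]
    refine Finset.prod_congr rfl fun b _ => Finset.prod_congr rfl fun b' _ => ?_
    simp only [hG, hΦr]
    refine if_congr (and_congr ?_ hf.lt_iff_lt) rfl rfl
    simp only [hE, Fin.lt_def, embE_inr_val]
    omega
  have hrl : (∏ b, ∏ a, G (E (Sum.inr b)) (E (Sum.inl a))) = 1 := by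
    refine Finset.prod_eq_one fun b _ => Finset.prod_eq_one fun a _ => ?_
    simp only [hG]
    rw [if_neg]
    rintro ⟨h, -⟩
    rw [Fin.lt_def] at h
    simp only [hE, embE_inl_val, embE_inr_val] at h
    omega
  have hlr : (∏ a, ∏ b, G (E (Sum.inl a)) (E (Sum.inr b)))
      = ∏ x ∈ Finset.univ.filter (fun x : Fin (2*t) × Fin (2*m) => f x.2 < e x.1),
          (-q (f x.2) (e x.1)) := by
    have h1 : (∏ a, ∏ b, G (E (Sum.inl a)) (E (Sum.inr b)))
        = ∏ a, ∏ b, (if f (σ₂ b) < e (σ₁ a) then -q (f (σ₂ b)) (e (σ₁ a)) else 1) := by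
      refine Finset.prod_congr rfl fun a _ => Finset.prod_congr rfl fun b _ => ?_
      simp only [hG, hΦl, hΦr]
      refine if_congr ?_ rfl rfl
      have hlt : E (Sum.inl a) < E (Sum.inr b) := by
        rw [Fin.lt_def]
        simp only [hE, embE_inl_val, embE_inr_val]
        omega
      simp only [hlt, true_and]
    have h2 : (∏ x ∈ Finset.univ.filter (fun x : Fin (2*t) × Fin (2*m) => f x.2 < e x.1),
          (-q (f x.2) (e x.1)))
        = ∏ a, ∏ b, (if f b < e a then -q (f b) (e a) else 1) := by
      rw [Finset.prod_filter,
        Fintype.prod_prod_type' (f := fun a b => if f b < e a then -q (f b) (e a) else 1)]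
    have h3 : ∀ a' : Fin (2*t),
        (∏ b, (if f (σ₂ b) < e a' then -q (f (σ₂ b)) (e a') else 1))
          = ∏ b, (if f b < e a' then -q (f b) (e a') else 1) :=
      fun a' => Equiv.prod_comp σ₂ (fun b => if f b < e a' then -q (f b) (e a') else 1)
    rw [h1, h2]
    simp only [h3]
    exact Equiv.prod_comp σ₁ (fun a => ∏ b, (if f b < e a then -q (f b) (e a) else 1))
  have step2 : (∏ a, ∏ y : Fin (2*t) ⊕ Fin (2*m), G (E (Sum.inl a)) (E y))
      = (∏ a, ∏ a', G (E (Sum.inl a)) (E (Sum.inl a')))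
        * (∏ a, ∏ b, G (E (Sum.inl a)) (E (Sum.inr b))) := by
    rw [← Finset.prod_mul_distrib]
    exact Finset.prod_congr rfl fun a _ => Fintype.prod_sum_type _
  have step3 : (∏ b, ∏ y : Fin (2*t) ⊕ Fin (2*m), G (E (Sum.inr b)) (E y))
      = (∏ b, ∏ a', G (E (Sum.inr b)) (E (Sum.inl a')))
        * (∏ b, ∏ b', G (E (Sum.inr b)) (E (Sum.inr b'))) := by
    rw [← Finset.prod_mul_distrib]
    exact Finset.prod_congr rfl fun b _ => Fintype.prod_sum_type _
  rw [step1, step2, step3, hll, hlr, hrl, hrr]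
  ring

lemma buildPerm_pairCond {t m : ℕ} {e : Fin (2*t) → Fin (2*(t+m))} {f : Fin (2*m) → Fin (2*(t+m))}
    (he : StrictMono e) (hf : StrictMono f) (hd : ∀ a b, e a ≠ f b)
    {σ₁ : Equiv.Perm (Fin (2*t))} {σ₂ : Equiv.Perm (Fin (2*m))}
    (h1 : ∀ i : Fin t, σ₁ (pairIdx i 0) < σ₁ (pairIdx i 1))
    (h2 : ∀ j : Fin m, σ₂ (pairIdx j 0) < σ₂ (pairIdx j 1)) :
    ∀ i : Fin (t+m),
      buildPerm he hf hd σ₁ σ₂ (pairIdx i 0) < buildPerm he hf hd σ₁ σ₂ (pairIdx i 1) := by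
  intro i
  rcases lt_or_ge i.val t with h | h
  · have hi : i = Fin.castAdd m ⟨i.val, h⟩ := Fin.ext rfl
    rw [hi, pairIdx_castAdd, pairIdx_castAdd, buildPerm_apply, buildPerm_apply,
      buildFun_inl, buildFun_inl]
    exact he (h1 _)
  · have hi : i = Fin.natAdd t ⟨i.val - t, by omega⟩ := Fin.ext (by simp; omega)
    rw [hi, pairIdx_natAdd, pairIdx_natAdd, buildPerm_apply, buildPerm_apply,
      buildFun_inr, buildFun_inr]
    exact hf (h2 _)

lemma oprod_buildPerm {t m : ℕ} {e : Fin (2*t) → Fin (2*(t+m))} {f : Fin (2*m) → Fin (2*(t+m))}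
    (he : StrictMono e) (hf : StrictMono f) (hd : ∀ a b, e a ≠ f b)
    (σ₁ : Equiv.Perm (Fin (2*t))) (σ₂ : Equiv.Perm (Fin (2*m)))
    (B : Fin (2*(t+m)) → Fin (2*(t+m)) → A) :
    oprod (fun i : Fin (t+m) =>
        B (buildPerm he hf hd σ₁ σ₂ (pairIdx i 0)) (buildPerm he hf hd σ₁ σ₂ (pairIdx i 1)))
      = oprod (fun i : Fin t => B (e (σ₁ (pairIdx i 0))) (e (σ₁ (pairIdx i 1))))
        * oprod (fun j : Fin m => B (f (σ₂ (pairIdx j 0))) (f (σ₂ (pairIdx j 1)))) := by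
  rw [oprod_split_s13]
  congr 1
  · exact congrArg oprod (funext fun i => by
      rw [pairIdx_castAdd, pairIdx_castAdd, buildPerm_apply, buildPerm_apply,
        buildFun_inl, buildFun_inl])
  · exact congrArg oprod (funext fun j => by
      rw [pairIdx_natAdd, pairIdx_natAdd, buildPerm_apply, buildPerm_apply,
        buildFun_inr, buildFun_inr])

lemma exists_build {t m : ℕ} (σ : Equiv.Perm (Fin (2*(t+m))))
    (hσ : ∀ i : Fin (t+m), σ (pairIdx i 0) < σ (pairIdx i 1)) :
    ∃ (e : Fin (2*t) → Fin (2*(t+m))) (f : Fin (2*m) → Fin (2*(t+m)))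
      (he : StrictMono e) (hf : StrictMono f) (hd : ∀ a b, e a ≠ f b)
      (σ₁ : Equiv.Perm (Fin (2*t))) (σ₂ : Equiv.Perm (Fin (2*m))),
      (∀ i : Fin t, σ₁ (pairIdx i 0) < σ₁ (pairIdx i 1)) ∧
      (∀ j : Fin m, σ₂ (pairIdx j 0) < σ₂ (pairIdx j 1)) ∧
      buildPerm he hf hd σ₁ σ₂ = σ := by
  set g : Fin (2*t) → Fin (2*(t+m)) := fun a => σ (embE t m (Sum.inl a)) with hg
  set g' : Fin (2*m) → Fin (2*(t+m)) := fun b => σ (embE t m (Sum.inr b)) with hg'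
  have hginj : Function.Injective g :=
    σ.injective.comp ((embE t m).injective.comp Sum.inl_injective)
  have hg'inj : Function.Injective g' :=
    σ.injective.comp ((embE t m).injective.comp Sum.inr_injective)
  set S : Finset (Fin (2*(t+m))) := Finset.image g Finset.univ with hS
  have hcS : S.card = 2*t := by
    rw [hS, Finset.card_image_of_injective _ hginj, Finset.card_univ, Fintype.card_fin]
  have hcSc : Sᶜ.card = 2*m := by
    rw [Finset.card_compl, hcS, Fintype.card_fin]
    omega
  have hgmem : ∀ a, g a ∈ S := fun a => Finset.mem_image_of_mem g (Finset.mem_univ a)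
  have hg'mem : ∀ b, g' b ∈ Sᶜ := by
    intro b
    rw [Finset.mem_compl, hS]
    intro hb
    obtain ⟨a, -, ha⟩ := Finset.mem_image.mp hb
    have : Sum.inl a = Sum.inr b := (embE t m).injective (σ.injective ha)
    simp at this
  set e : Fin (2*t) → Fin (2*(t+m)) := ⇑(S.orderEmbOfFin hcS) with he'
  set f : Fin (2*m) → Fin (2*(t+m)) := ⇑(Sᶜ.orderEmbOfFin hcSc) with hf'
  have he : StrictMono e := (S.orderEmbOfFin hcS).strictMono
  have hf : StrictMono f := (Sᶜ.orderEmbOfFin hcSc).strictMono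
  have hd : ∀ a b, e a ≠ f b := by
    intro a b hab
    have h1 : e a ∈ S := Finset.orderEmbOfFin_mem S hcS a
    have h2 : f b ∈ Sᶜ := Finset.orderEmbOfFin_mem Sᶜ hcSc b
    rw [hab] at h1
    exact (Finset.mem_compl.mp h2) h1
  set u₁ : Fin (2*t) → Fin (2*t) :=
    fun a => (S.orderIsoOfFin hcS).symm ⟨g a, hgmem a⟩ with hu₁
  set u₂ : Fin (2*m) → Fin (2*m) :=
    fun b => (Sᶜ.orderIsoOfFin hcSc).symm ⟨g' b, hg'mem b⟩ with hu₂
  have hu₁inj : Function.Injective u₁ := by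
    intro a a' h
    apply hginj
    have := congrArg (fun x => ((S.orderIsoOfFin hcS) x : Fin (2*(t+m)))) h
    simpa [hu₁] using this
  have hu₂inj : Function.Injective u₂ := by
    intro b b' h
    apply hg'inj
    have := congrArg (fun x => ((Sᶜ.orderIsoOfFin hcSc) x : Fin (2*(t+m)))) h
    simpa [hu₂] using this
  set σ₁ : Equiv.Perm (Fin (2*t)) :=
    Equiv.ofBijective u₁ (Finite.injective_iff_bijective.mp hu₁inj) with hσ₁
  set σ₂ : Equiv.Perm (Fin (2*m)) :=
    Equiv.ofBijective u₂ (Finite.injective_iff_bijective.mp hu₂inj) with hσ₂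
  have key1 : ∀ a, e (σ₁ a) = g a := by
    intro a
    have : e (u₁ a) = ((S.orderIsoOfFin hcS) ((S.orderIsoOfFin hcS).symm ⟨g a, hgmem a⟩) :
        Fin (2*(t+m))) := (Finset.coe_orderIsoOfFin_apply S hcS _).symm
    rw [hσ₁]
    simpa using this
  have key2 : ∀ b, f (σ₂ b) = g' b := by
    intro b
    have : f (u₂ b) = ((Sᶜ.orderIsoOfFin hcSc) ((Sᶜ.orderIsoOfFin hcSc).symm ⟨g' b, hg'mem b⟩) :
        Fin (2*(t+m))) := (Finset.coe_orderIsoOfFin_apply Sᶜ hcSc _).symm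
    rw [hσ₂]
    simpa using this
  refine ⟨e, f, he, hf, hd, σ₁, σ₂, ?_, ?_, ?_⟩
  · intro i
    rw [← he.lt_iff_lt, key1, key1, hg]
    simp only
    rw [← pairIdx_castAdd, ← pairIdx_castAdd]
    exact hσ (Fin.castAdd m i)
  · intro j
    rw [← hf.lt_iff_lt, key2, key2, hg']
    simp only
    rw [← pairIdx_natAdd, ← pairIdx_natAdd]
    exact hσ (Fin.natAdd t j)
  · apply Equiv.ext
    intro k
    obtain ⟨y, rfl⟩ := (embE t m).surjective k
    rcases y with a | b
    · rw [buildPerm_apply, buildFun_inl, key1]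
    · rw [buildPerm_apply, buildFun_inr, key2]

lemma image_f_eq_compl {t m : ℕ} {e : Fin (2*t) → Fin (2*(t+m))} {f : Fin (2*m) → Fin (2*(t+m))}
    (he : StrictMono e) (hf : StrictMono f) (hd : ∀ a b, e a ≠ f b) :
    Finset.image f Finset.univ = (Finset.image e Finset.univ)ᶜ := by
  have hsub : Finset.image f Finset.univ ⊆ (Finset.image e Finset.univ)ᶜ := by
    intro x hx
    obtain ⟨b, -, rfl⟩ := Finset.mem_image.mp hx
    rw [Finset.mem_compl]
    intro hxe
    obtain ⟨a, -, ha⟩ := Finset.mem_image.mp hxe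
    exact hd a b ha
  refine Finset.eq_of_subset_of_card_le hsub (le_of_eq ?_)
  rw [Finset.card_compl, Finset.card_image_of_injective _ he.injective,
    Finset.card_image_of_injective _ hf.injective]
  simp
  omega

lemma build_inj {t m : ℕ} {e e' : Fin (2*t) → Fin (2*(t+m))} {f f' : Fin (2*m) → Fin (2*(t+m))}
    (he : StrictMono e) (hf : StrictMono f) (hd : ∀ a b, e a ≠ f b)
    (he' : StrictMono e') (hf' : StrictMono f') (hd' : ∀ a b, e' a ≠ f' b)
    {σ₁ σ₁' : Equiv.Perm (Fin (2*t))} {σ₂ σ₂' : Equiv.Perm (Fin (2*m))}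
    (h : buildPerm he hf hd σ₁ σ₂ = buildPerm he' hf' hd' σ₁' σ₂') :
    e = e' ∧ f = f' ∧ σ₁ = σ₁' ∧ σ₂ = σ₂' := by
  have hk := Equiv.ext_iff.mp h
  have hl : ∀ a, e (σ₁ a) = e' (σ₁' a) := by
    intro a
    have := hk (embE t m (Sum.inl a))
    rwa [buildPerm_apply, buildPerm_apply, buildFun_inl, buildFun_inl] at this
  have hr : ∀ b, f (σ₂ b) = f' (σ₂' b) := by
    intro b
    have := hk (embE t m (Sum.inr b))
    rwa [buildPerm_apply, buildPerm_apply, buildFun_inr, buildFun_inr] at this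
  have himage : ∀ (g g'' : Fin (2*t) → Fin (2*(t+m))) (τ τ' : Equiv.Perm (Fin (2*t))),
      (∀ a, g (τ a) = g'' (τ' a)) →
      Finset.image g Finset.univ = Finset.image g'' Finset.univ := by
    intro g g'' τ τ' hgg
    ext x
    simp only [Finset.mem_image, Finset.mem_univ, true_and]
    constructor
    · rintro ⟨a, rfl⟩
      exact ⟨τ' (τ.symm a), by rw [← hgg (τ.symm a)]; simp⟩
    · rintro ⟨a, rfl⟩
      exact ⟨τ (τ'.symm a), by rw [hgg (τ'.symm a)]; simp⟩
  have hSe : Finset.image e Finset.univ = Finset.image e' Finset.univ :=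
    himage e e' σ₁ σ₁' hl
  have hce : (Finset.image e Finset.univ).card = 2*t := by
    rw [Finset.card_image_of_injective _ he.injective]; simp
  have hce' : (Finset.image e Finset.univ).card = 2*t := hce
  have hee' : e = e' := by
    have h1 : e = ⇑((Finset.image e Finset.univ).orderEmbOfFin hce) :=
      Finset.orderEmbOfFin_unique hce
        (fun x => Finset.mem_image_of_mem e (Finset.mem_univ x)) he
    have h2 : e' = ⇑((Finset.image e Finset.univ).orderEmbOfFin hce) :=
      Finset.orderEmbOfFin_unique hce
        (fun x => by rw [hSe]; exact Finset.mem_image_of_mem e' (Finset.mem_univ x)) he'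
    exact h1.trans h2.symm
  have hSf : Finset.image f Finset.univ = Finset.image f' Finset.univ := by
    rw [image_f_eq_compl he hf hd, image_f_eq_compl he' hf' hd', hSe]
  have hcf : (Finset.image f Finset.univ).card = 2*m := by
    rw [Finset.card_image_of_injective _ hf.injective]; simp
  have hff' : f = f' := by
    have h1 : f = ⇑((Finset.image f Finset.univ).orderEmbOfFin hcf) :=
      Finset.orderEmbOfFin_unique hcf
        (fun x => Finset.mem_image_of_mem f (Finset.mem_univ x)) hf
    have h2 : f' = ⇑((Finset.image f Finset.univ).orderEmbOfFin hcf) :=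
      Finset.orderEmbOfFin_unique hcf
        (fun x => by rw [hSf]; exact Finset.mem_image_of_mem f' (Finset.mem_univ x)) hf'
    exact h1.trans h2.symm
  refine ⟨hee', hff', ?_, ?_⟩
  · exact Equiv.ext fun a => he.injective (by rw [hl a, hee'])
  · exact Equiv.ext fun b => hf.injective (by rw [hr b, hff'])

theorem qpf_core {t m : ℕ} (q : Fin (2*(t+m)) → Fin (2*(t+m)) → K)
    (B : Fin (2*(t+m)) → Fin (2*(t+m)) → A) :
    qpf q B
      = ∑ ef ∈ Finset.univ.filter
          (fun ef : (Fin (2*t) → Fin (2*(t+m))) × (Fin (2*m) → Fin (2*(t+m))) =>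
            (∀ a b, a < b → ef.1 a < ef.1 b) ∧ (∀ a b, a < b → ef.2 a < ef.2 b) ∧
            (∀ a b, ef.1 a ≠ ef.2 b)),
        (∏ x ∈ Finset.univ.filter
            (fun x : Fin (2*t) × Fin (2*m) => ef.2 x.2 < ef.1 x.1),
          (-q (ef.2 x.2) (ef.1 x.1))) •
        (qpf (fun a b => q (ef.1 a) (ef.1 b)) (fun a b => B (ef.1 a) (ef.1 b))
          * qpf (fun a b => q (ef.2 a) (ef.2 b)) (fun a b => B (ef.2 a) (ef.2 b))) := by
  classical
  set F := Finset.univ.filter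
      (fun ef : (Fin (2*t) → Fin (2*(t+m))) × (Fin (2*m) → Fin (2*(t+m))) =>
        (∀ a b, a < b → ef.1 a < ef.1 b) ∧ (∀ a b, a < b → ef.2 a < ef.2 b) ∧
        (∀ a b, ef.1 a ≠ ef.2 b)) with hF
  set P1 := Finset.univ.filter
      (fun σ₁ : Equiv.Perm (Fin (2*t)) =>
        ∀ i : Fin t, σ₁ (pairIdx i 0) < σ₁ (pairIdx i 1)) with hP1
  set P2 := Finset.univ.filter
      (fun σ₂ : Equiv.Perm (Fin (2*m)) =>
        ∀ j : Fin m, σ₂ (pairIdx j 0) < σ₂ (pairIdx j 1)) with hP2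
  have key : ∀ (c s₁ s₂ : K) (x y : A),
      c • ((s₁ • x) * (s₂ • y)) = (c * (s₁ * s₂)) • (x * y) := by
    intro c s₁ s₂ x y
    rw [smul_mul_assoc, mul_smul_comm, smul_smul, smul_smul, mul_assoc]
  symm
  calc (∑ ef ∈ F,
        (∏ x ∈ Finset.univ.filter
            (fun x : Fin (2*t) × Fin (2*m) => ef.2 x.2 < ef.1 x.1),
          (-q (ef.2 x.2) (ef.1 x.1))) •
        (qpf (fun a b => q (ef.1 a) (ef.1 b)) (fun a b => B (ef.1 a) (ef.1 b))
          * qpf (fun a b => q (ef.2 a) (ef.2 b)) (fun a b => B (ef.2 a) (ef.2 b))))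
      = ∑ ef ∈ F, ∑ σ₁ ∈ P1, ∑ σ₂ ∈ P2,
          ((∏ x ∈ Finset.univ.filter
              (fun x : Fin (2*t) × Fin (2*m) => ef.2 x.2 < ef.1 x.1),
            (-q (ef.2 x.2) (ef.1 x.1)))
            * (qSign (fun a b => q (ef.1 a) (ef.1 b)) σ₁
               * qSign (fun a b => q (ef.2 a) (ef.2 b)) σ₂)) •
          (oprod (fun i : Fin t => B (ef.1 (σ₁ (pairIdx i 0))) (ef.1 (σ₁ (pairIdx i 1))))
            * oprod (fun j : Fin m => B (ef.2 (σ₂ (pairIdx j 0))) (ef.2 (σ₂ (pairIdx j 1))))) := by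
        refine Finset.sum_congr rfl fun ef _ => ?_
        rw [qpf, qpf, ← hP1, ← hP2, Finset.sum_mul_sum, Finset.smul_sum]
        refine Finset.sum_congr rfl fun σ₁ _ => ?_
        rw [Finset.smul_sum]
        refine Finset.sum_congr rfl fun σ₂ _ => ?_
        rw [key]
    _ = ∑ z ∈ F ×ˢ (P1 ×ˢ P2),
          ((∏ x ∈ Finset.univ.filter
              (fun x : Fin (2*t) × Fin (2*m) => z.1.2 x.2 < z.1.1 x.1),
            (-q (z.1.2 x.2) (z.1.1 x.1)))
            * (qSign (fun a b => q (z.1.1 a) (z.1.1 b)) z.2.1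
               * qSign (fun a b => q (z.1.2 a) (z.1.2 b)) z.2.2)) •
          (oprod (fun i : Fin t => B (z.1.1 (z.2.1 (pairIdx i 0))) (z.1.1 (z.2.1 (pairIdx i 1))))
            * oprod (fun j : Fin m =>
                B (z.1.2 (z.2.2 (pairIdx j 0))) (z.1.2 (z.2.2 (pairIdx j 1))))) := by
        rw [Finset.sum_product]
        exact Finset.sum_congr rfl fun ef _ => by rw [Finset.sum_product]
    _ = qpf q B := by
        rw [qpf]
        have hmem : ∀ z ∈ F ×ˢ (P1 ×ˢ P2),
            StrictMono z.1.1 ∧ StrictMono z.1.2 ∧ (∀ a b, z.1.1 a ≠ z.1.2 b) := by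
          intro z hz
          rw [Finset.mem_product, hF, Finset.mem_filter] at hz
          exact ⟨fun a b hab => hz.1.2.1 a b hab, fun a b hab => hz.1.2.2.1 a b hab,
            hz.1.2.2.2⟩
        refine Finset.sum_bij
          (fun z hz => buildPerm (hmem z hz).1 (hmem z hz).2.1 (hmem z hz).2.2 z.2.1 z.2.2)
          ?_ ?_ ?_ ?_
        · intro z hz
          rw [Finset.mem_filter]
          refine ⟨Finset.mem_univ _, ?_⟩
          have hz' := hz
          simp only [hF, hP1, hP2, Finset.mem_product, Finset.mem_filter] at hz'
          exact buildPerm_pairCond _ _ _ hz'.2.1.2 hz'.2.2.2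
        · intro z hz z' hz' h
          obtain ⟨h1, h2, h3, h4⟩ := build_inj (hmem z hz).1 (hmem z hz).2.1 (hmem z hz).2.2
            (hmem z' hz').1 (hmem z' hz').2.1 (hmem z' hz').2.2 h
          obtain ⟨⟨e, f⟩, σ₁, σ₂⟩ := z
          obtain ⟨⟨e', f'⟩, σ₁', σ₂'⟩ := z'
          simp only [Prod.mk.injEq]
          exact ⟨⟨h1, h2⟩, h3, h4⟩
        · intro σ hσmem
          rw [Finset.mem_filter] at hσmem
          obtain ⟨e, f, he, hf, hd, σ₁, σ₂, h1, h2, hbuild⟩ := exists_build σ hσmem.2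
          refine ⟨((e, f), (σ₁, σ₂)), ?_, ?_⟩
          · rw [Finset.mem_product, Finset.mem_product, hF, hP1, hP2,
              Finset.mem_filter, Finset.mem_filter, Finset.mem_filter]
            exact ⟨⟨Finset.mem_univ _, fun a b hab => he hab, fun a b hab => hf hab, hd⟩,
              ⟨Finset.mem_univ _, h1⟩, ⟨Finset.mem_univ _, h2⟩⟩
          · exact (Equiv.ext fun k => rfl).trans hbuild
        · intro z hz
          rw [qSign_split q (hmem z hz).1 (hmem z hz).2.1 (hmem z hz).2.2,
            oprod_buildPerm (hmem z hz).1 (hmem z hz).2.1 (hmem z hz).2.2]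

theorem qpf_core' {t m' m : ℕ} (h : m' = m) (q : Fin (2*(t+m)) → Fin (2*(t+m)) → K)
    (B : Fin (2*(t+m)) → Fin (2*(t+m)) → A) :
    qpf q B
      = ∑ ef ∈ Finset.univ.filter
          (fun ef : (Fin (2*t) → Fin (2*(t+m))) × (Fin (2*m') → Fin (2*(t+m))) =>
            (∀ a b, a < b → ef.1 a < ef.1 b) ∧ (∀ a b, a < b → ef.2 a < ef.2 b) ∧
            (∀ a b, ef.1 a ≠ ef.2 b)),
        (∏ x ∈ Finset.univ.filter
            (fun x : Fin (2*t) × Fin (2*m') => ef.2 x.2 < ef.1 x.1),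
          (-q (ef.2 x.2) (ef.1 x.1))) •
        (qpf (fun a b => q (ef.1 a) (ef.1 b)) (fun a b => B (ef.1 a) (ef.1 b))
          * qpf (fun a b => q (ef.2 a) (ef.2 b)) (fun a b => B (ef.2 a) (ef.2 b))) := by
  subst h
  exact qpf_core q B

/-- Pfaffian expansion: `Pf_q(B) = Σ_I inv(I, Iᶜ) Pf_q(B_I) Pf_q(B_{Iᶜ})`,
the sum running over all `2t`-element subsets `I` of `{1, …, 2n}`; a subset together
with its complement is encoded by the pair of strictly increasing enumerations
`(e, f)` with disjoint ranges. -/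
theorem qpf_expansion {n : ℕ} (p q : Fin (2 * n) → Fin (2 * n) → K) (u : K)
    (hpu : PUCondition p q u) (B : Fin (2 * n) → Fin (2 * n) → A)
    (hB : ∀ i j : Fin (2 * n), i < j → B j i = -(p i j • B i j))
    (t : ℕ) (ht : t ≤ n) :
    qpf q B
      = ∑ ef ∈ Finset.univ.filter
          (fun ef : (Fin (2 * t) → Fin (2 * n)) × (Fin (2 * (n - t)) → Fin (2 * n)) =>
            (∀ a b, a < b → ef.1 a < ef.1 b) ∧ (∀ a b, a < b → ef.2 a < ef.2 b) ∧
            (∀ a b, ef.1 a ≠ ef.2 b)),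
        (∏ x ∈ Finset.univ.filter
            (fun x : Fin (2 * t) × Fin (2 * (n - t)) => ef.2 x.2 < ef.1 x.1),
          (-q (ef.2 x.2) (ef.1 x.1))) •
        (qpf (fun a b => q (ef.1 a) (ef.1 b)) (fun a b => B (ef.1 a) (ef.1 b))
          * qpf (fun a b => q (ef.2 a) (ef.2 b)) (fun a b => B (ef.2 a) (ef.2 b))) := by
  obtain ⟨m, rfl⟩ : ∃ m, n = t + m := ⟨n - t, by omega⟩
  exact qpf_core' (by omega) q B
end
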